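/- Let q ≥ 3 and b ≥ 2 be integers and δ ∈ (0, 1/(q−1)], and let M be the q-state symmetric (Potts) channel with parameter δ. If b·(1 − qδ)² / (1 − (q−2)δ) ≤ 1, then the reconstruction problem for the b-ary tree T_b and M is not solvable. -/

import Mathlib

open Filter

/-- The distribution of the configuration at level `n` of the `b`-ary tree,
for the broadcast process with channel `M`, given that the root has value `i`.
Vertices at level `n` are encoded as paths `Fin n → Fin b`. -/
noncomputable def levelDist {A : Type} [Fintype A] [DecidableEq A]
    (M : A → A → ℝ) (b : ℕ) (i : A) : (n : ℕ) → ((Fin n → Fin b) → A) → ℝ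
  | 0 => fun σ => if σ = (fun _ => i) then 1 else 0
  | n + 1 => fun τ => ∑ σ : (Fin n → Fin b) → A, levelDist M b i n σ *
      ∏ w : Fin (n + 1) → Fin b, M (σ fun m => w m.castSucc) (τ w)

/-- Total variation distance between two (densities of) probability measures
on a finite set. -/
noncomputable def tvDist {Ω : Type*} [Fintype Ω] (P Q : Ω → ℝ) : ℝ :=
  (1 / 2) * ∑ σ, |P σ - Q σ|

/-- The `q`-state symmetric (Potts) channel with parameter `δ`. -/
noncomputable def potts (q : ℕ) (δ : ℝ) : Fin q → Fin q → ℝ :=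
  fun i j => if i = j then 1 - ((q : ℝ) - 1) * δ else δ

section AllAux
open Finset






section Aux
variable {A : Type} [Fintype A] [DecidableEq A]

/-- Splitting a path in `Fin (n+1) → Fin b` into first step and rest. -/
def pathEquiv (b n : ℕ) : (Fin (n + 1) → Fin b) ≃ (Fin b × (Fin n → Fin b)) where
  toFun w := (w 0, Fin.tail w)
  invFun p := Fin.cons p.1 p.2
  left_inv w := Fin.cons_self_tail w
  right_inv p := by simp [Fin.tail_cons]

/-- Splitting a level-(n+1) configuration into the `b` subtree configurations. -/
def configEquiv (A : Type) (b n : ℕ) :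
    ((Fin (n + 1) → Fin b) → A) ≃ (Fin b → ((Fin n → Fin b) → A)) where
  toFun τ c v := τ (Fin.cons c v)
  invFun g w := g (w 0) (Fin.tail w)
  left_inv τ := by funext w; simp [Fin.cons_self_tail]
  right_inv g := by funext c v; simp [Fin.tail_cons]

omit [DecidableEq A] in
lemma sum_prod_pieces {b n : ℕ} (f : Fin b → ((Fin n → Fin b) → A) → ℝ) :
    ∑ τ : (Fin (n + 1) → Fin b) → A, ∏ c : Fin b, f c (fun v => τ (Fin.cons c v)) =
      ∏ c : Fin b, ∑ u : (Fin n → Fin b) → A, f c u := by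
  rw [Fintype.prod_sum (fun c u => f c u)]
  exact Fintype.sum_equiv (configEquiv A b n) _ _ (fun τ => rfl)

lemma prod_paths_split {b n : ℕ} (F : (Fin (n + 1) → Fin b) → ℝ) :
    ∏ w : Fin (n + 1) → Fin b, F w =
      ∏ c : Fin b, ∏ v : Fin n → Fin b, F (Fin.cons c v) := by
  rw [← Fintype.prod_prod_type' (fun c v => F (Fin.cons c v))]
  exact Fintype.prod_equiv (pathEquiv b n) _ _ (fun w => by
    simp [pathEquiv, Fin.cons_self_tail])

lemma cons_castSucc {b n : ℕ} (c : Fin b) (v : Fin (n + 1) → Fin b) :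
    (fun m : Fin (n + 1) => (Fin.cons c v : Fin (n + 2) → Fin b) m.castSucc) =
      Fin.cons c (fun m : Fin n => v m.castSucc) := by
  funext m
  refine Fin.cases ?_ ?_ m
  · simp
  · intro j
    have : (j.succ : Fin (n + 1)).castSucc = (j.castSucc).succ := by
      exact Fin.ext rfl
    rw [this]
    simp

lemma levelDist_succ_eq (M : A → A → ℝ) (b : ℕ) :
    ∀ (n : ℕ) (i : A) (τ : (Fin (n + 1) → Fin b) → A),
      levelDist M b i (n + 1) τ =
        ∏ c : Fin b, ∑ k : A, M i k * levelDist M b k n (fun v => τ (Fin.cons c v)) := by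
  intro n
  induction n with
  | zero =>
    intro i τ
    show (∑ σ : (Fin 0 → Fin b) → A, (if σ = (fun _ => i) then 1 else 0) *
        ∏ w : Fin 1 → Fin b, M (σ fun m => w m.castSucc) (τ w)) = _
    rw [Finset.sum_eq_single (fun _ => i)]
    · rw [if_pos rfl, one_mul]
      rw [prod_paths_split (fun w => M i (τ w))]
      refine Finset.prod_congr rfl (fun c _ => ?_)
      have h1 : ∏ v : Fin 0 → Fin b, M i (τ (Fin.cons c v)) = M i (τ (Fin.cons c default)) := by
        rw [Fintype.prod_subsingleton _ default]
      rw [h1]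
      have h2 : ∀ k : A, levelDist M b k 0 (fun v => τ (Fin.cons c v)) =
          if k = τ (Fin.cons c default) then 1 else 0 := by
        intro k
        show (if (fun v => τ (Fin.cons c v)) = (fun _ => k) then (1:ℝ) else 0) = _
        congr 1
        simp only [eq_iff_iff]
        constructor
        · intro hf; have := congrFun hf default; rw [this]
        · intro hk; funext v; rw [Subsingleton.elim v default]; exact hk.symm
      simp_rw [h2, mul_ite, mul_one, mul_zero]
      rw [Finset.sum_ite_eq' Finset.univ (τ (Fin.cons c default)) (fun k => M i k)]
      simp
    · intro σ _ hσ; rw [if_neg hσ, zero_mul]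
    · intro h; exact absurd (Finset.mem_univ _) h
  | succ n ih =>
    intro i τ
    show (∑ σ : (Fin (n+1) → Fin b) → A, levelDist M b i (n+1) σ *
        ∏ w : Fin (n+2) → Fin b, M (σ fun m => w m.castSucc) (τ w)) = _
    have hsplit : ∀ σ : (Fin (n+1) → Fin b) → A,
        (∏ w : Fin (n+2) → Fin b, M (σ fun m => w m.castSucc) (τ w)) =
        ∏ c : Fin b, ∏ v : Fin (n+1) → Fin b,
          M ((fun u => σ (Fin.cons c u)) (fun m => v m.castSucc)) (τ (Fin.cons c v)) := by
      intro σ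
      rw [prod_paths_split (fun w => M (σ fun m => w m.castSucc) (τ w))]
      refine Finset.prod_congr rfl fun c _ => Finset.prod_congr rfl fun v _ => ?_
      rw [cons_castSucc]
    have key := sum_prod_pieces (b := b) (n := n) (fun c (x : (Fin n → Fin b) → A) =>
      (∑ k : A, M i k * levelDist M b k n x) *
        ∏ v : Fin (n+1) → Fin b, M (x (fun m => v m.castSucc)) (τ (Fin.cons c v)))
    calc
      (∑ σ : (Fin (n+1) → Fin b) → A, levelDist M b i (n+1) σ *
          ∏ w : Fin (n+2) → Fin b, M (σ fun m => w m.castSucc) (τ w))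
        = ∑ σ : (Fin (n+1) → Fin b) → A, ∏ c : Fin b,
            ((∑ k : A, M i k * levelDist M b k n (fun v => σ (Fin.cons c v))) *
             ∏ v : Fin (n+1) → Fin b,
               M ((fun v' => σ (Fin.cons c v')) (fun m => v m.castSucc)) (τ (Fin.cons c v))) := by
          refine Finset.sum_congr rfl fun σ _ => ?_
          rw [ih i σ, hsplit σ, ← Finset.prod_mul_distrib]
      _ = ∏ c : Fin b, ∑ x : (Fin n → Fin b) → A,
            ((∑ k : A, M i k * levelDist M b k n x) *
             ∏ v : Fin (n+1) → Fin b, M (x (fun m => v m.castSucc)) (τ (Fin.cons c v))) := key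
      _ = ∏ c : Fin b, ∑ k : A, M i k * levelDist M b k (n+1) (fun v => τ (Fin.cons c v)) := by
          refine Finset.prod_congr rfl fun c _ => ?_
          have hLD : ∀ k : A, levelDist M b k (n+1) (fun v => τ (Fin.cons c v)) =
              ∑ x : (Fin n → Fin b) → A, levelDist M b k n x *
                ∏ v : Fin (n+1) → Fin b, M (x (fun m => v m.castSucc)) (τ (Fin.cons c v)) := by
            intro k; rfl
          calc
            ∑ x : (Fin n → Fin b) → A,
              ((∑ k : A, M i k * levelDist M b k n x) *
               ∏ v : Fin (n+1) → Fin b, M (x (fun m => v m.castSucc)) (τ (Fin.cons c v)))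
              = ∑ x : (Fin n → Fin b) → A, ∑ k : A, M i k * (levelDist M b k n x *
                 ∏ v : Fin (n+1) → Fin b, M (x (fun m => v m.castSucc)) (τ (Fin.cons c v))) := by
                refine Finset.sum_congr rfl fun x _ => ?_
                rw [Finset.sum_mul]
                exact Finset.sum_congr rfl fun k _ => mul_assoc _ _ _
            _ = ∑ k : A, ∑ x : (Fin n → Fin b) → A, M i k * (levelDist M b k n x *
                 ∏ v : Fin (n+1) → Fin b, M (x (fun m => v m.castSucc)) (τ (Fin.cons c v))) :=
                Finset.sum_comm
            _ = ∑ k : A, M i k * levelDist M b k (n+1) (fun v => τ (Fin.cons c v)) := by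
                refine Finset.sum_congr rfl fun k _ => ?_
                rw [← Finset.mul_sum, hLD k]








end Aux

section Helpers
variable {Ω : Type} [Fintype Ω]

lemma sqrt_prod {ι : Type*} (s : Finset ι) (f : ι → ℝ) (hf : ∀ i ∈ s, 0 ≤ f i) :
    Real.sqrt (∏ i ∈ s, f i) = ∏ i ∈ s, Real.sqrt (f i) := by
  induction s using Finset.cons_induction with
  | empty => simp
  | cons a s ha ih =>
    rw [Finset.prod_cons, Finset.prod_cons, Real.sqrt_mul (hf a (Finset.mem_cons_self a s)),
      ih (fun i hi => hf i (Finset.mem_cons_of_mem hi))]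

lemma sqrt_mul_sqrt_le_half {p q : ℝ} (hp : 0 ≤ p) (hq : 0 ≤ q) :
    Real.sqrt p * Real.sqrt q ≤ (p + q) / 2 := by
  nlinarith [sq_nonneg (Real.sqrt p - Real.sqrt q), Real.sq_sqrt hp, Real.sq_sqrt hq]

/-- affinity between two densities -/
noncomputable def affgen (P Q : Ω → ℝ) : ℝ := ∑ σ, Real.sqrt (P σ) * Real.sqrt (Q σ)

lemma affgen_nonneg (P Q : Ω → ℝ) : 0 ≤ affgen P Q :=
  Finset.sum_nonneg fun σ _ => mul_nonneg (Real.sqrt_nonneg _) (Real.sqrt_nonneg _)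

lemma affgen_le_one {P Q : Ω → ℝ} (hP : ∀ σ, 0 ≤ P σ) (hQ : ∀ σ, 0 ≤ Q σ)
    (hP1 : ∑ σ, P σ = 1) (hQ1 : ∑ σ, Q σ = 1) : affgen P Q ≤ 1 := by
  have : affgen P Q ≤ ∑ σ, (P σ + Q σ) / 2 :=
    Finset.sum_le_sum fun σ _ => sqrt_mul_sqrt_le_half (hP σ) (hQ σ)
  calc affgen P Q ≤ ∑ σ, (P σ + Q σ) / 2 := this
    _ = 1 := by
      rw [← Finset.sum_div, Finset.sum_add_distrib, hP1, hQ1]; norm_num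

lemma sum_sq_sqrt_sub {P Q : Ω → ℝ} (hP : ∀ σ, 0 ≤ P σ) (hQ : ∀ σ, 0 ≤ Q σ)
    (hP1 : ∑ σ, P σ = 1) (hQ1 : ∑ σ, Q σ = 1) :
    ∑ σ, (Real.sqrt (P σ) - Real.sqrt (Q σ)) ^ 2 = 2 - 2 * affgen P Q := by
  have : ∀ σ : Ω, (Real.sqrt (P σ) - Real.sqrt (Q σ)) ^ 2 =
      P σ + Q σ - 2 * (Real.sqrt (P σ) * Real.sqrt (Q σ)) := by
    intro σ
    have h1 := Real.sq_sqrt (hP σ)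
    have h2 := Real.sq_sqrt (hQ σ)
    nlinarith
  rw [Finset.sum_congr rfl (fun σ _ => this σ)]
  rw [Finset.sum_sub_distrib, Finset.sum_add_distrib, hP1, hQ1, ← Finset.mul_sum]
  norm_num [affgen]

lemma tvDist_le_sqrt {P Q : Ω → ℝ} (hP : ∀ σ, 0 ≤ P σ) (hQ : ∀ σ, 0 ≤ Q σ)
    (hP1 : ∑ σ, P σ = 1) (hQ1 : ∑ σ, Q σ = 1) :
    tvDist P Q ≤ Real.sqrt (2 * (1 - affgen P Q)) := by
  have htv0 : 0 ≤ tvDist P Q :=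
    mul_nonneg (by norm_num) (Finset.sum_nonneg fun σ _ => abs_nonneg _)
  have hx0 : 0 ≤ 2 * (1 - affgen P Q) := by
    have := affgen_le_one hP hQ hP1 hQ1; linarith
  rw [Real.le_sqrt htv0 hx0]
  have hCS := Finset.sum_mul_sq_le_sq_mul_sq Finset.univ
    (fun σ => |Real.sqrt (P σ) - Real.sqrt (Q σ)|) (fun σ => Real.sqrt (P σ) + Real.sqrt (Q σ))
  have habs : ∀ σ : Ω, |Real.sqrt (P σ) - Real.sqrt (Q σ)| *
      (Real.sqrt (P σ) + Real.sqrt (Q σ)) = |P σ - Q σ| := by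
    intro σ
    have h1 := Real.sq_sqrt (hP σ)
    have h2 := Real.sq_sqrt (hQ σ)
    have hnn : 0 ≤ Real.sqrt (P σ) + Real.sqrt (Q σ) :=
      add_nonneg (Real.sqrt_nonneg _) (Real.sqrt_nonneg _)
    rw [← abs_of_nonneg hnn, ← abs_mul]
    congr 1
    nlinarith
  have hsq : ∀ σ : Ω, |Real.sqrt (P σ) - Real.sqrt (Q σ)| ^ 2 =
      (Real.sqrt (P σ) - Real.sqrt (Q σ)) ^ 2 := fun σ => sq_abs _
  rw [Finset.sum_congr rfl (fun σ _ => habs σ), Finset.sum_congr rfl (fun σ _ => hsq σ),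
    sum_sq_sqrt_sub hP hQ hP1 hQ1] at hCS
  have hplus : ∑ σ, (Real.sqrt (P σ) + Real.sqrt (Q σ)) ^ 2 = 2 + 2 * affgen P Q := by
    have : ∀ σ : Ω, (Real.sqrt (P σ) + Real.sqrt (Q σ)) ^ 2 =
        P σ + Q σ + 2 * (Real.sqrt (P σ) * Real.sqrt (Q σ)) := by
      intro σ
      have h1 := Real.sq_sqrt (hP σ)
      have h2 := Real.sq_sqrt (hQ σ)
      nlinarith
    rw [Finset.sum_congr rfl (fun σ _ => this σ), Finset.sum_add_distrib,
      Finset.sum_add_distrib, hP1, hQ1, ← Finset.mul_sum]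
    norm_num [affgen]
  rw [hplus] at hCS
  have haff1 : affgen P Q ≤ 1 := affgen_le_one hP hQ hP1 hQ1
  have haff0 : 0 ≤ affgen P Q := affgen_nonneg P Q
  have h8 : (∑ σ, |P σ - Q σ|) ^ 2 ≤ 8 * (1 - affgen P Q) := by nlinarith
  unfold tvDist
  nlinarith [Finset.sum_nonneg (fun σ (_ : σ ∈ Finset.univ) => abs_nonneg (P σ - Q σ))]

end Helpers






section LD
variable {A : Type} [Fintype A] [DecidableEq A]

omit [DecidableEq A] in
lemma sum_pi_prod {ι : Type*} [Fintype ι] [DecidableEq ι] (g : ι → A → ℝ) :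
    ∑ τ : ι → A, ∏ w : ι, g w (τ w) = ∏ w : ι, ∑ a : A, g w a := by
  rw [Fintype.prod_sum]

lemma levelDist_nonneg {M : A → A → ℝ} (hM0 : ∀ i j, 0 ≤ M i j) (b : ℕ) :
    ∀ (n : ℕ) (i : A) (σ : (Fin n → Fin b) → A), 0 ≤ levelDist M b i n σ := by
  intro n
  induction n with
  | zero => intro i σ; unfold levelDist; split <;> norm_num
  | succ n ih =>
    intro i τ
    refine Finset.sum_nonneg fun σ _ => mul_nonneg (ih i σ) ?_
    exact Finset.prod_nonneg fun w _ => hM0 _ _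
  termination_by n => n

lemma levelDist_sum_one {M : A → A → ℝ} (hM1 : ∀ i, ∑ j, M i j = 1) (b : ℕ) :
    ∀ (n : ℕ) (i : A), ∑ σ : (Fin n → Fin b) → A, levelDist M b i n σ = 1 := by
  intro n
  induction n with
  | zero =>
    intro i
    show ∑ σ : (Fin 0 → Fin b) → A, (if σ = (fun _ => i) then (1:ℝ) else 0) = 1
    rw [Finset.sum_ite_eq' Finset.univ (fun _ => i) (fun _ => (1:ℝ))]
    simp
  | succ n ih =>
    intro i
    show ∑ τ : (Fin (n+1) → Fin b) → A, ∑ σ : (Fin n → Fin b) → A, levelDist M b i n σ *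
        ∏ w : Fin (n + 1) → Fin b, M (σ fun m => w m.castSucc) (τ w) = 1
    rw [Finset.sum_comm]
    have : ∀ σ : (Fin n → Fin b) → A,
        ∑ τ : (Fin (n+1) → Fin b) → A, levelDist M b i n σ *
          ∏ w : Fin (n + 1) → Fin b, M (σ fun m => w m.castSucc) (τ w) =
        levelDist M b i n σ := by
      intro σ
      rw [← Finset.mul_sum]
      have h2 : (∑ τ : (Fin (n+1) → Fin b) → A, ∏ w : Fin (n+1) → Fin b,
          M (σ fun m => w m.castSucc) (τ w)) =
          ∏ w : Fin (n+1) → Fin b, ∑ a : A, M (σ fun m => w m.castSucc) a :=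
        (Fintype.prod_sum _).symm
      rw [h2, Finset.prod_congr rfl (fun w _ => hM1 _)]
      simp
    rw [Finset.sum_congr rfl (fun σ _ => this σ), ih i]

/-- the one-step mixture of children distributions -/
noncomputable def chanMix (M : A → A → ℝ) (b n : ℕ) (i : A) (σ : (Fin n → Fin b) → A) : ℝ :=
  ∑ k : A, M i k * levelDist M b k n σ

lemma chanMix_nonneg {M : A → A → ℝ} (hM0 : ∀ i j, 0 ≤ M i j) (b n : ℕ) (i : A)
    (σ : (Fin n → Fin b) → A) : 0 ≤ chanMix M b n i σ :=
  Finset.sum_nonneg fun k _ => mul_nonneg (hM0 _ _) (levelDist_nonneg hM0 b n k σ)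

lemma chanMix_sum_one {M : A → A → ℝ} (hM1 : ∀ i, ∑ j, M i j = 1) (b n : ℕ) (i : A) :
    ∑ σ : (Fin n → Fin b) → A, chanMix M b n i σ = 1 := by
  unfold chanMix
  rw [Finset.sum_comm]
  have : ∀ k : A, ∑ σ : (Fin n → Fin b) → A, M i k * levelDist M b k n σ = M i k := by
    intro k
    rw [← Finset.mul_sum, levelDist_sum_one hM1 b n k, mul_one]
  rw [Finset.sum_congr rfl (fun k _ => this k), hM1 i]

end LD


set_option maxHeartbeats 1000000 in
/-- pointwise Hellinger contraction inequality -/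
lemma sqrt_contract {α β lam p q a a' : ℝ} (hp : 0 ≤ p) (hq : 0 ≤ q)
    (ha : 0 ≤ a) (ha' : 0 ≤ a') (hdiff : a - a' = lam * (p - q))
    (hla : α * p + β * q ≤ a) (hla' : β * p + α * q ≤ a')
    (hα : 0 ≤ α) (hβ : 0 ≤ β) (hs : 0 < α + β) :
    (Real.sqrt a - Real.sqrt a') ^ 2 ≤
      lam ^ 2 / (α + β) * (Real.sqrt p - Real.sqrt q) ^ 2 := by
  set sp := Real.sqrt p with hsp
  set sq := Real.sqrt q with hsq
  set sa := Real.sqrt a with hsa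
  set sa' := Real.sqrt a' with hsa'
  have hsp0 : 0 ≤ sp := Real.sqrt_nonneg _
  have hsq0 : 0 ≤ sq := Real.sqrt_nonneg _
  have hsa0 : 0 ≤ sa := Real.sqrt_nonneg _
  have hsa'0 : 0 ≤ sa' := Real.sqrt_nonneg _
  have hp2 : sp ^ 2 = p := Real.sq_sqrt hp
  have hq2 : sq ^ 2 = q := Real.sq_sqrt hq
  have ha2 : sa ^ 2 = a := Real.sq_sqrt ha
  have ha'2 : sa' ^ 2 = a' := Real.sq_sqrt ha'
  set s := α + β with hsdef
  -- √a √a' ≥ s √p √q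
  have hcross : s * (sp * sq) ≤ sa * sa' := by
    have h0 : 0 ≤ β * p + α * q := by positivity
    have h0' : 0 ≤ α * p + β * q := by positivity
    have haa' : (α * p + β * q) * (β * p + α * q) ≤ a * a' :=
      mul_le_mul hla hla' h0 ha
    have hmid : (α + β) ^ 2 * (p * q) ≤ (α * p + β * q) * (β * p + α * q) := by
      nlinarith [mul_nonneg (mul_nonneg hα hβ) (sq_nonneg (p - q))]
    have h1 : (s * (sp * sq)) ^ 2 ≤ (sa * sa') ^ 2 := by
      have e1 : (s * (sp * sq)) ^ 2 = s ^ 2 * (sp ^ 2 * sq ^ 2) := by ring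
      have e2 : (sa * sa') ^ 2 = sa ^ 2 * sa' ^ 2 := by ring
      rw [e1, e2, hp2, hq2, ha2, ha'2, hsdef]
      linarith
    exact le_of_pow_le_pow_left₀ two_ne_zero (mul_nonneg hsa0 hsa'0) h1
  have hT : s * (sp + sq) ^ 2 ≤ (sa + sa') ^ 2 := by nlinarith
  have hkey : (sa - sa') ^ 2 * (sa + sa') ^ 2 = lam ^ 2 * ((sp - sq) ^ 2 * (sp + sq) ^ 2) := by
    have e1 : (sa - sa') ^ 2 * (sa + sa') ^ 2 = (sa ^ 2 - sa' ^ 2) ^ 2 := by ring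
    have e2 : lam ^ 2 * ((sp - sq) ^ 2 * (sp + sq) ^ 2) = (lam * (sp ^ 2 - sq ^ 2)) ^ 2 := by ring
    rw [e1, e2, hp2, hq2, ha2, ha'2, hdiff]
  rcases eq_or_lt_of_le (add_nonneg hsp0 hsq0) with hU0 | hU
  · -- sp + sq = 0 : p = q = 0
    have hsp' : sp = 0 := by linarith
    have hsq' : sq = 0 := by linarith
    have hpq : p = q := by rw [← hp2, ← hq2, hsp', hsq']
    have haeq : sa = sa' := by
      have h6 : a - a' = 0 := by rw [hpq] at hdiff; simpa using hdiff
      have : a = a' := by linarith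
      rw [hsa, hsa', this]
    rw [haeq]
    have : (0:ℝ) ≤ lam ^ 2 / s := div_nonneg (sq_nonneg _) hs.le
    nlinarith [sq_nonneg (sp - sq)]
  · -- sp + sq > 0
    have hU2 : 0 < (sp + sq) ^ 2 := by positivity
    rw [div_mul_eq_mul_div, le_div_iff₀ hs]
    -- goal : (sa - sa')^2 * s ≤ lam^2 * (sp-sq)^2
    have h4 : (sa - sa') ^ 2 * s * (sp + sq) ^ 2 ≤ (sa - sa') ^ 2 * (sa + sa') ^ 2 := by
      nlinarith [sq_nonneg (sa - sa')]
    rw [hkey] at h4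
    have h5 : (sa - sa') ^ 2 * s * (sp + sq) ^ 2 ≤ lam ^ 2 * (sp - sq) ^ 2 * (sp + sq) ^ 2 := by
      linarith [h4]
    exact le_of_mul_le_mul_right h5 hU2


lemma one_sub_pow_le (b : ℕ) (y : ℝ) (hy0 : 0 ≤ y) (hy1 : y ≤ 1) :
    1 - (b : ℝ) * y + ((b : ℝ) - 1) * y ^ 2 ≤ (1 - y) ^ b := by
  induction b with
  | zero => simp; nlinarith
  | succ b ih =>
    rcases Nat.eq_zero_or_pos b with rfl | hb
    · push_cast; nlinarith
    have hb1 : (1:ℝ) ≤ (b : ℝ) := by exact_mod_cast hb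
    have h2 := mul_le_mul_of_nonneg_left ih (by linarith : (0:ℝ) ≤ 1 - y)
    have e : (1 - y) ^ (b + 1) = (1 - y) * (1 - y) ^ b := by ring
    rw [e]
    push_cast
    nlinarith [mul_nonneg (mul_nonneg (by linarith : (0:ℝ) ≤ (b:ℝ) - 1) (sq_nonneg y)) (by linarith : (0:ℝ) ≤ 1 - y)]

/-- the sequence convergence lemma -/
lemma seq_tendsto_zero (x : ℕ → ℝ) (θ : ℝ) (bR : ℝ) (hb : 2 ≤ bR) (hθ : 0 ≤ θ)
    (hbθ : bR * θ ≤ 1)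
    (hx0 : ∀ n, 0 ≤ x n)
    (hrec : ∀ n, x (n + 1) ≤ bR * θ * x n - (bR - 1) * θ ^ 2 * (x n) ^ 2) :
    Tendsto x atTop (nhds 0) := by
  have hanti : Antitone x := by
    refine antitone_nat_of_succ_le (fun n => ?_)
    have h1 := hrec n
    nlinarith [hx0 n, sq_nonneg (θ * x n), hx0 n, mul_nonneg hθ (hx0 n)]
  have hbdd : BddBelow (Set.range x) := ⟨0, fun y ⟨n, hn⟩ => hn ▸ hx0 n⟩
  have hconv : Tendsto x atTop (nhds (⨅ n, x n)) :=
    tendsto_atTop_ciInf hanti hbdd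
  set l := ⨅ n, x n with hl
  have hl0 : 0 ≤ l := le_ciInf (fun n => hx0 n)
  have hconv' : Tendsto (fun n => x (n + 1)) atTop (nhds l) :=
    hconv.comp (tendsto_add_atTop_nat 1)
  have hconvrhs : Tendsto (fun n => bR * θ * x n - (bR - 1) * θ ^ 2 * (x n) ^ 2) atTop
      (nhds (bR * θ * l - (bR - 1) * θ ^ 2 * l ^ 2)) :=
    ((hconv.const_mul _).sub ((hconv.pow 2).const_mul _))
  have hineq : l ≤ bR * θ * l - (bR - 1) * θ ^ 2 * l ^ 2 :=
    le_of_tendsto_of_tendsto' hconv' hconvrhs hrec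
  have hlz : l = 0 := by
    rcases eq_or_lt_of_le hθ with hθ0 | hθpos
    · rw [← hθ0] at hineq; simp at hineq; linarith
    · by_contra hne
      have hlpos : 0 < l := lt_of_le_of_ne hl0 (Ne.symm hne)
      have h1 : bR * θ * l ≤ l := by nlinarith
      have h2 : 0 < (bR - 1) * θ ^ 2 * l ^ 2 :=
        mul_pos (mul_pos (by linarith) (pow_pos hθpos 2)) (pow_pos hlpos 2)
      linarith
  rw [hlz] at hconv
  exact hconv

section Potts
open Finset
variable {q : ℕ} {δ : ℝ}

lemma potts_nonneg (hq : 3 ≤ q) (hδ0 : 0 < δ) (hδ1 : δ ≤ 1 / ((q : ℝ) - 1))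
    (i j : Fin q) : 0 ≤ potts q δ i j := by
  have hq3 : (3:ℝ) ≤ (q:ℝ) := by exact_mod_cast hq
  have hq1 : (0:ℝ) < (q:ℝ) - 1 := by linarith
  have h1 : ((q:ℝ) - 1) * δ ≤ 1 := by
    have := (le_div_iff₀ hq1).mp hδ1
    nlinarith
  unfold potts
  split
  · linarith
  · linarith

lemma potts_sum_one (hq : 3 ≤ q) (i : Fin q) : ∑ j, potts q δ i j = 1 := by
  have : ∀ j : Fin q, potts q δ i j = δ + (if i = j then 1 - (q:ℝ) * δ else 0) := by
    intro j; unfold potts; split <;> ring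
  rw [Finset.sum_congr rfl (fun j _ => this j), Finset.sum_add_distrib,
    Finset.sum_const, Finset.sum_ite_eq Finset.univ i (fun _ => 1 - (q:ℝ)*δ)]
  simp only [Finset.card_univ, Fintype.card_fin, Finset.mem_univ, if_true, nsmul_eq_mul]
  ring

lemma chanMix_diff (hq : 3 ≤ q) {b : ℕ} {i j : Fin q} (hij : i ≠ j) (n : ℕ)
    (σ : (Fin n → Fin b) → Fin q) :
    chanMix (potts q δ) b n i σ - chanMix (potts q δ) b n j σ =
      (1 - (q:ℝ) * δ) * (levelDist (potts q δ) b i n σ - levelDist (potts q δ) b j n σ) := by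
  unfold chanMix
  rw [← Finset.sum_sub_distrib]
  have hptw : ∀ k : Fin q, potts q δ i k * levelDist (potts q δ) b k n σ -
      potts q δ j k * levelDist (potts q δ) b k n σ =
      (if i = k then (1 - (q:ℝ)*δ) * levelDist (potts q δ) b k n σ else 0) -
      (if j = k then (1 - (q:ℝ)*δ) * levelDist (potts q δ) b k n σ else 0) := by
    intro k
    by_cases h1 : i = k <;> by_cases h2 : j = k
    · exact absurd (h1.trans h2.symm) hij
    · rw [show potts q δ i k = 1 - ((q:ℝ)-1)*δ from if_pos h1,
        show potts q δ j k = δ from if_neg h2, if_pos h1, if_neg h2]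
      ring
    · rw [show potts q δ i k = δ from if_neg h1, show potts q δ j k = 1 - ((q:ℝ)-1)*δ from if_pos h2,
        if_neg h1, if_pos h2]
      ring
    · rw [show potts q δ i k = δ from if_neg h1, show potts q δ j k = δ from if_neg h2,
        if_neg h1, if_neg h2]
      ring
  rw [Finset.sum_congr rfl (fun k _ => hptw k), Finset.sum_sub_distrib,
    Finset.sum_ite_eq Finset.univ i _, Finset.sum_ite_eq Finset.univ j _]
  simp only [Finset.mem_univ, if_true]
  ring

lemma chanMix_lower (hq : 3 ≤ q) (hδ0 : 0 < δ) (hδ1 : δ ≤ 1 / ((q : ℝ) - 1))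
    {b : ℕ} {i j : Fin q} (hij : i ≠ j) (n : ℕ) (σ : (Fin n → Fin b) → Fin q) :
    (1 - ((q:ℝ) - 1) * δ) * levelDist (potts q δ) b i n σ +
      δ * levelDist (potts q δ) b j n σ ≤ chanMix (potts q δ) b n i σ := by
  have hM0 := potts_nonneg hq hδ0 hδ1
  have hL := levelDist_nonneg (M := potts q δ) hM0 b n
  have hsub : ({i, j} : Finset (Fin q)) ⊆ Finset.univ := Finset.subset_univ _
  have := Finset.sum_le_sum_of_subset_of_nonneg hsub
    (f := fun k => potts q δ i k * levelDist (potts q δ) b k n σ)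
    (fun k _ _ => mul_nonneg (hM0 i k) (hL k σ))
  rw [Finset.sum_pair hij] at this
  rw [show potts q δ i i = 1 - ((q:ℝ)-1)*δ from if_pos rfl,
    show potts q δ i j = δ from if_neg hij] at this
  exact this

lemma chanMix_lower' (hq : 3 ≤ q) (hδ0 : 0 < δ) (hδ1 : δ ≤ 1 / ((q : ℝ) - 1))
    {b : ℕ} {i j : Fin q} (hij : i ≠ j) (n : ℕ) (σ : (Fin n → Fin b) → Fin q) :
    δ * levelDist (potts q δ) b i n σ +
      (1 - ((q:ℝ) - 1) * δ) * levelDist (potts q δ) b j n σ ≤ chanMix (potts q δ) b n j σ := by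
  have hM0 := potts_nonneg hq hδ0 hδ1
  have hL := levelDist_nonneg (M := potts q δ) hM0 b n
  have hsub : ({i, j} : Finset (Fin q)) ⊆ Finset.univ := Finset.subset_univ _
  have := Finset.sum_le_sum_of_subset_of_nonneg hsub
    (f := fun k => potts q δ j k * levelDist (potts q δ) b k n σ)
    (fun k _ _ => mul_nonneg (hM0 j k) (hL k σ))
  rw [Finset.sum_pair hij] at this
  rw [show potts q δ j i = δ from if_neg (fun hh => hij hh.symm),
    show potts q δ j j = 1 - ((q:ℝ)-1)*δ from if_pos rfl] at this
  exact this

/-- the Hellinger-affinity recursion -/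
lemma affgen_levelDist_succ {A : Type} [Fintype A] [DecidableEq A]
    {M : A → A → ℝ} (hM0 : ∀ i j, 0 ≤ M i j) (b n : ℕ) (i j : A) :
    affgen (levelDist M b i (n+1)) (levelDist M b j (n+1)) =
      (affgen (chanMix M b n i) (chanMix M b n j)) ^ b := by
  unfold affgen
  have hA0 := chanMix_nonneg (M := M) hM0 b n
  have step1 : ∀ τ : (Fin (n+1) → Fin b) → A,
      Real.sqrt (levelDist M b i (n+1) τ) * Real.sqrt (levelDist M b j (n+1) τ) =
      ∏ c : Fin b, (Real.sqrt (chanMix M b n i (fun v => τ (Fin.cons c v))) *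
        Real.sqrt (chanMix M b n j (fun v => τ (Fin.cons c v)))) := by
    intro τ
    have hi : levelDist M b i (n+1) τ =
        ∏ c : Fin b, chanMix M b n i (fun v => τ (Fin.cons c v)) :=
      levelDist_succ_eq M b n i τ
    have hj : levelDist M b j (n+1) τ =
        ∏ c : Fin b, chanMix M b n j (fun v => τ (Fin.cons c v)) :=
      levelDist_succ_eq M b n j τ
    rw [hi, hj, sqrt_prod _ _ (fun c _ => hA0 i _), sqrt_prod _ _ (fun c _ => hA0 j _),
      ← Finset.prod_mul_distrib]
  rw [Finset.sum_congr rfl (fun τ _ => step1 τ)]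
  rw [sum_prod_pieces (b := b) (n := n) (fun c (x : (Fin n → Fin b) → A) =>
    Real.sqrt (chanMix M b n i x) * Real.sqrt (chanMix M b n j x))]
  rw [Finset.prod_const, Finset.card_univ, Fintype.card_fin]

end Potts

end AllAux

/-- If `b (1 - qδ)² / (1 - (q-2)δ) ≤ 1` then the reconstruction problem for the
`b`-ary tree and the `q`-state Potts channel with parameter `δ` is not
solvable. -/
theorem potts_not_solvable (q b : ℕ) (hq : 3 ≤ q) (hb : 2 ≤ b)
    (δ : ℝ) (hδ0 : 0 < δ) (hδ1 : δ ≤ 1 / ((q : ℝ) - 1))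
    (h : (b : ℝ) * (1 - (q : ℝ) * δ) ^ 2 / (1 - ((q : ℝ) - 2) * δ) ≤ 1) :
    ¬ ∃ i j : Fin q, ∃ L > 0, Tendsto
        (fun n => tvDist (levelDist (potts q δ) b i n) (levelDist (potts q δ) b j n))
        atTop (nhds L) := by
  rintro ⟨i, j, L, hL, hT⟩
  have hq3 : (3:ℝ) ≤ (q:ℝ) := by exact_mod_cast hq
  have hq1 : (0:ℝ) < (q:ℝ) - 1 := by linarith
  have hδq1 : ((q:ℝ) - 1) * δ ≤ 1 := by
    have := (le_div_iff₀ hq1).mp hδ1; nlinarith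
  have hα : 0 ≤ 1 - ((q:ℝ)-1)*δ := by linarith
  have hs : 0 < 1 - ((q:ℝ)-2)*δ := by nlinarith
  have hθ0 : 0 ≤ (1 - (q:ℝ)*δ)^2 / (1 - ((q:ℝ)-2)*δ) := div_nonneg (sq_nonneg _) hs.le
  have hbR : (2:ℝ) ≤ (b:ℝ) := by exact_mod_cast hb
  have hbθ : (b:ℝ) * ((1 - (q:ℝ)*δ)^2 / (1 - ((q:ℝ)-2)*δ)) ≤ 1 := by
    rw [← mul_div_assoc]; exact h
  have hM0 : ∀ i j, 0 ≤ potts q δ i j := potts_nonneg hq hδ0 hδ1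
  have hM1 : ∀ i, ∑ j, potts q δ i j = 1 := potts_sum_one (δ := δ) hq
  have main : Tendsto
      (fun n => tvDist (levelDist (potts q δ) b i n) (levelDist (potts q δ) b j n))
      atTop (nhds 0) := by
    by_cases hij : i = j
    · subst hij
      have hz : (fun n => tvDist (levelDist (potts q δ) b i n) (levelDist (potts q δ) b i n))
          = fun _ => (0:ℝ) := by
        funext n; unfold tvDist; simp
      rw [hz]; exact tendsto_const_nhds
    · set θ := (1 - (q:ℝ)*δ)^2 / (1 - ((q:ℝ)-2)*δ) with hθdef
      set x : ℕ → ℝ := fun n => 1 - affgen (levelDist (potts q δ) b i n)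
        (levelDist (potts q δ) b j n) with hxdef
      have hPn : ∀ n (σ : (Fin n → Fin b) → Fin q), 0 ≤ levelDist (potts q δ) b i n σ :=
        fun n => levelDist_nonneg hM0 b n i
      have hQn : ∀ n (σ : (Fin n → Fin b) → Fin q), 0 ≤ levelDist (potts q δ) b j n σ :=
        fun n => levelDist_nonneg hM0 b n j
      have hP1 : ∀ n, ∑ σ : (Fin n → Fin b) → Fin q, levelDist (potts q δ) b i n σ = 1 :=
        fun n => levelDist_sum_one hM1 b n i
      have hQ1 : ∀ n, ∑ σ : (Fin n → Fin b) → Fin q, levelDist (potts q δ) b j n σ = 1 :=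
        fun n => levelDist_sum_one hM1 b n j
      have hx0 : ∀ n, 0 ≤ x n := by
        intro n
        have := affgen_le_one (hPn n) (hQn n) (hP1 n) (hQ1 n)
        simp only [hxdef]; linarith
      have hx1 : ∀ n, x n ≤ 1 := by
        intro n
        have := affgen_nonneg (levelDist (potts q δ) b i n) (levelDist (potts q δ) b j n)
        simp only [hxdef]; linarith
      have hθhalf : 2 * θ ≤ 1 := by nlinarith
      have hrec : ∀ n, x (n+1) ≤ (b:ℝ)*θ*(x n) - ((b:ℝ)-1)*θ^2*(x n)^2 := by
        intro n
        have hA0i : ∀ σ, 0 ≤ chanMix (potts q δ) b n i σ := chanMix_nonneg hM0 b n i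
        have hA0j : ∀ σ, 0 ≤ chanMix (potts q δ) b n j σ := chanMix_nonneg hM0 b n j
        have hA1i : ∑ σ : (Fin n → Fin b) → Fin q, chanMix (potts q δ) b n i σ = 1 :=
          chanMix_sum_one hM1 b n i
        have hA1j : ∑ σ : (Fin n → Fin b) → Fin q, chanMix (potts q δ) b n j σ = 1 :=
          chanMix_sum_one hM1 b n j
        set a := affgen (chanMix (potts q δ) b n i) (chanMix (potts q δ) b n j) with hadef
        have hsucc : affgen (levelDist (potts q δ) b i (n+1)) (levelDist (potts q δ) b j (n+1))
            = a ^ b := affgen_levelDist_succ hM0 b n i j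
        have hedge : 1 - a ≤ θ * x n := by
          have hsum1 : ∑ σ : (Fin n → Fin b) → Fin q,
              (Real.sqrt (chanMix (potts q δ) b n i σ) -
                Real.sqrt (chanMix (potts q δ) b n j σ)) ^ 2 = 2 - 2*a :=
            sum_sq_sqrt_sub hA0i hA0j hA1i hA1j
          have hsum2 : ∑ σ : (Fin n → Fin b) → Fin q,
              (Real.sqrt (levelDist (potts q δ) b i n σ) -
                Real.sqrt (levelDist (potts q δ) b j n σ)) ^ 2 =
              2 - 2 * affgen (levelDist (potts q δ) b i n) (levelDist (potts q δ) b j n) :=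
            sum_sq_sqrt_sub (hPn n) (hQn n) (hP1 n) (hQ1 n)
          have hptw : ∀ σ : (Fin n → Fin b) → Fin q,
              (Real.sqrt (chanMix (potts q δ) b n i σ) -
                Real.sqrt (chanMix (potts q δ) b n j σ)) ^ 2 ≤
              θ * (Real.sqrt (levelDist (potts q δ) b i n σ) -
                Real.sqrt (levelDist (potts q δ) b j n σ)) ^ 2 := by
            intro σ
            have key := sqrt_contract (hPn n σ) (hQn n σ) (hA0i σ) (hA0j σ)
              (chanMix_diff hq hij n σ) (chanMix_lower hq hδ0 hδ1 hij n σ)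
              (chanMix_lower' hq hδ0 hδ1 hij n σ) hα hδ0.le
              (by linarith : (0:ℝ) < (1 - ((q:ℝ)-1)*δ) + δ)
            rwa [show (1 - ((q:ℝ)-1)*δ) + δ = 1 - ((q:ℝ)-2)*δ from by ring] at key
          have hsumle := Finset.sum_le_sum (fun σ (_ : σ ∈ Finset.univ) => hptw σ)
          rw [hsum1, ← Finset.mul_sum, hsum2] at hsumle
          simp only [hxdef]
          linarith
        have ha0 : 0 ≤ a := affgen_nonneg _ _
        have hy0 : 0 ≤ θ * x n := mul_nonneg hθ0 (hx0 n)
        have hy1 : θ * x n ≤ 1 := by nlinarith [hx1 n, hx0 n]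
        have h1a0 : 0 ≤ 1 - θ * x n := by linarith
        have hpowle : (1 - θ * x n)^b ≤ a^b :=
          pow_le_pow_left₀ h1a0 (by linarith) b
        have hpoly := one_sub_pow_le b (θ * x n) hy0 hy1
        have hxsucc : x (n+1) = 1 - a^b := by
          simp only [hxdef]; rw [hsucc]
        rw [hxsucc]
        nlinarith [hpowle, hpoly]
      have hxto : Tendsto x atTop (nhds 0) := seq_tendsto_zero x θ (b:ℝ) hbR hθ0 hbθ hx0 hrec
      have htvle : ∀ n, tvDist (levelDist (potts q δ) b i n) (levelDist (potts q δ) b j n) ≤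
          Real.sqrt (2 * x n) := by
        intro n
        have := tvDist_le_sqrt (hPn n) (hQn n) (hP1 n) (hQ1 n)
        simpa only [hxdef] using this
      have htv0 : ∀ n, 0 ≤ tvDist (levelDist (potts q δ) b i n) (levelDist (potts q δ) b j n) := by
        intro n
        exact mul_nonneg (by norm_num) (Finset.sum_nonneg fun σ _ => abs_nonneg _)
      have hsqto : Tendsto (fun n => Real.sqrt (2 * x n)) atTop (nhds 0) := by
        have h2x : Tendsto (fun n => 2 * x n) atTop (nhds (2*0)) := hxto.const_mul 2
        have h3 := (Real.continuous_sqrt.tendsto (2*0)).comp h2x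
        rw [show (2:ℝ)*0 = 0 from by ring, Real.sqrt_zero] at h3
        exact h3
      exact tendsto_of_tendsto_of_tendsto_of_le_of_le tendsto_const_nhds hsqto htv0 htvle
  have : L = 0 := tendsto_nhds_unique hT main
  linarith
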